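/- Let G be a finite abelian group, K a field containing a primitive exp(G)-th root of unity with char K not dividing |G|, and let G act on the K-vector space V with basis {e_χ : χ ∈ Ĝ} by g·e_χ = χ(g)e_χ. Let T be the set of G-invariant monomials {x_{1}, x_χ x_{χ⁻¹}, x_χ x_ρ x_{(χρ)⁻¹} : χ,ρ ∈ Ĝ \ {1}} in the dual variables. If v, w ∈ V have all coordinates v_χ, w_χ nonzero for every nontrivial character χ, then G·v = G·w if and only if f(v) = f(w) for all f ∈ T. -/

import Mathlib

/-- Degree ≤ 3 invariant monomials separate points of the torus:
for `v, w` with all coordinates at nontrivial characters nonzero,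
`G·v = G·w` iff all invariant monomials of degree at most 3 agree on `v` and `w`. -/
theorem orbits_eq_iff_deg_three_monomials_agree
    {G : Type*} [CommGroup G] [Fintype G]
    {K : Type*} [Field K]
    (hchar : (Fintype.card G : K) ≠ 0)
    (ω : K) (hω : orderOf ω = Monoid.exponent G)
    (v w : (G →* Kˣ) → K)
    (hv : ∀ χ : G →* Kˣ, χ ≠ 1 → v χ ≠ 0)
    (hw : ∀ χ : G →* Kˣ, χ ≠ 1 → w χ ≠ 0) :
    (∃ g : G, ∀ χ : G →* Kˣ, (χ g : K) * v χ = w χ) ↔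
      (v 1 = w 1 ∧
       (∀ χ : G →* Kˣ, χ ≠ 1 → v χ * v χ⁻¹ = w χ * w χ⁻¹) ∧
       (∀ χ ρ : G →* Kˣ, χ ≠ 1 → ρ ≠ 1 →
         v χ * v ρ * v (χ * ρ)⁻¹ = w χ * w ρ * w (χ * ρ)⁻¹)) := by
  classical
  constructor
  · rintro ⟨g, hg⟩
    refine ⟨?_, ?_, ?_⟩
    · have := hg 1; simpa using this
    · intro χ _
      rw [← hg χ, ← hg χ⁻¹]
      have key : ((χ g : K)) * ((χ⁻¹ g : K)) = 1 := by
        rw [← Units.val_mul]; norm_cast; simp [← MonoidHom.mul_apply]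
      linear_combination (-(v χ * v χ⁻¹)) * key
    · intro χ ρ _ _
      rw [← hg χ, ← hg ρ, ← hg (χ * ρ)⁻¹]
      have key : ((χ g : K)) * ((ρ g : K)) * (((χ * ρ)⁻¹ g : K)) = 1 := by
        rw [← Units.val_mul, ← Units.val_mul]; norm_cast; simp [← MonoidHom.mul_apply]
      linear_combination (-(v χ * v ρ * v (χ * ρ)⁻¹)) * key
  · rintro ⟨h1, h2, h3⟩
    haveI hexp : NeZero (Monoid.exponent G) := ⟨Monoid.exponent_ne_zero_of_finite⟩
    haveI hE : HasEnoughRootsOfUnity K (Monoid.exponent G) :=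
      ⟨⟨ω, hω ▸ IsPrimitiveRoot.orderOf ω⟩, inferInstance⟩
    obtain ⟨e2⟩ := CommGroup.monoidHom_mulEquiv_of_hasEnoughRootsOfUnity G K
    haveI hfin : Finite (G →* Kˣ) := e2.toEquiv.finite_iff.mpr inferInstance
    have hdvd : Monoid.exponent (G →* Kˣ) ∣ Monoid.exponent G := by
      refine Monoid.exponent_dvd_of_forall_pow_eq_one fun φ ↦ ?_
      ext g
      simp [← map_pow, Monoid.pow_exponent_eq_one]
    haveI hE2 : HasEnoughRootsOfUnity K (Monoid.exponent (G →* Kˣ)) :=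
      HasEnoughRootsOfUnity.of_dvd K hdvd
    obtain ⟨e1⟩ := CommGroup.monoidHom_mulEquiv_of_hasEnoughRootsOfUnity (G →* Kˣ) K
    haveI hfin2 : Finite ((G →* Kˣ) →* Kˣ) := e1.toEquiv.finite_iff.mpr hfin
    set f : (G →* Kˣ) → K := fun χ => if χ = 1 then 1 else w χ / v χ with hf
    have hfne : ∀ χ, f χ ≠ 0 := by
      intro χ
      by_cases hχ : χ = 1
      · simp [hf, hχ]
      · simp only [hf, if_neg hχ]
        exact div_ne_zero (hw χ hχ) (hv χ hχ)
    have hfv : ∀ χ, f χ * v χ = w χ := by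
      intro χ
      by_cases hχ : χ = 1
      · simp [hf, hχ, h1]
      · simp only [hf, if_neg hχ]
        exact div_mul_cancel₀ (w χ) (hv χ hχ)
    have hmul : ∀ χ ρ : G →* Kˣ, f (χ * ρ) = f χ * f ρ := by
      intro χ ρ
      by_cases hχ : χ = 1
      · have e : (1 : G →* Kˣ) * ρ = ρ := one_mul ρ
        rw [hχ, e]; simp [hf]
      by_cases hρ : ρ = 1
      · have e : χ * (1 : G →* Kˣ) = χ := mul_one χ
        rw [hρ, e]; simp [hf]
      by_cases hχρ : χ * ρ = 1
      · have hρ' : ρ = χ⁻¹ := by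
          ext g; have := DFunLike.congr_fun hχρ g; simp at this; simp [eq_inv_of_mul_eq_one_right this]
        subst hρ'
        simp only [hf, if_pos hχρ, if_neg hχ, if_neg hρ]
        rw [div_mul_div_comm, eq_div_iff (mul_ne_zero (hv χ hχ) (hv _ hρ)), one_mul]
        exact h2 χ hχ
      · have hi : (χ * ρ)⁻¹ ≠ 1 := fun h => hχρ (inv_injective (h.trans (inv_one (G := G →* Kˣ)).symm))
        simp only [hf, if_neg hχ, if_neg hρ, if_neg hχρ]
        have h := h3 χ ρ hχ hρ
        have h' := h2 (χ * ρ) hχρ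
        rw [div_mul_div_comm, div_eq_div_iff (hv _ hχρ) (mul_ne_zero (hv _ hχ) (hv _ hρ))]
        have hcan : w (χ * ρ) * (v χ * v ρ) * v (χ * ρ)⁻¹ =
            w χ * w ρ * v (χ * ρ) * v (χ * ρ)⁻¹ := by
          linear_combination w (χ * ρ) * h - w χ * w ρ * h'
        exact mul_right_cancel₀ (hv _ hi) hcan
    let φ : (G →* Kˣ) →* Kˣ := MonoidHom.mk'
      (fun χ => Units.mk0 (f χ) (hfne χ))
      (fun χ ρ => by ext; exact hmul χ ρ)
    let ev : G →* ((G →* Kˣ) →* Kˣ) := MonoidHom.mk'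
      (fun g => MonoidHom.mk' (fun χ => χ g) (fun χ ρ => rfl))
      (fun g h => by ext χ; simp [map_mul])
    have hinj : Function.Injective ev := by
      rw [injective_iff_map_eq_one]
      intro g hg
      by_contra hgne
      obtain ⟨ψ, hψ⟩ := CommGroup.exists_apply_ne_one_of_hasEnoughRootsOfUnity G K hgne
      exact hψ (by simpa [ev] using congrArg (fun F : (G →* Kˣ) →* Kˣ => F ψ) hg)
    have hcard : Nat.card G = Nat.card ((G →* Kˣ) →* Kˣ) :=
      ((Nat.card_congr e1.toEquiv).trans (Nat.card_congr e2.toEquiv)).symm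
    have hsurj : Function.Surjective ev :=
      ((Nat.bijective_iff_injective_and_card ev).mpr ⟨hinj, hcard⟩).surjective
    obtain ⟨g, hg⟩ := hsurj φ
    refine ⟨g, fun χ => ?_⟩
    have hval : (χ g : Kˣ) = Units.mk0 (f χ) (hfne χ) := by
      have := congrArg (fun F : (G →* Kˣ) →* Kˣ => F χ) hg
      simpa [ev, φ] using this
    rw [show (χ g : K) = f χ from congrArg Units.val hval]
    exact hfv χ
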